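/- arXiv:2103.04861 — 2 statements merged into one kernel-verified Lean document; each statement's English description precedes it below -/
import Mathlib

section
/- Define the differential operator L_1 u = −u'' − (1/r)u' + (1/r²)u. Then for all r > 0, L_1 applied to the function r ↦ r(−I_1(r)² + I_0(r)·I_2(r)) equals 4·I_1(r)·(I_0(r) − I_1(r)/r). -/
open Real Filter Set Topology

/-- Modified Bessel function of the first kind of (integer) order `n`. -/
noncomputable def besselI (n : ℕ) (r : ℝ) : ℝ :=
  ∑' k : ℕ, (1 / (k.factorial * Real.Gamma (n + k + 1))) * (r / 2) ^ (n + 2 * k)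

/-- `P n r = I_{n+1}(r) / (r * I_n(r))`. -/
noncomputable def P (n : ℕ) (r : ℝ) : ℝ := besselI (n + 1) r / (r * besselI n r)

/-- The operator `L_1 u = -u'' - (1/r) u' + (1/r^2) u`. -/
noncomputable def L1 (u : ℝ → ℝ) (r : ℝ) : ℝ :=
  -(deriv (deriv u) r) - (1 / r) * deriv u r + (1 / r ^ 2) * u r

lemma besselI_eq (n : ℕ) (r : ℝ) :
    besselI n r = ∑' k : ℕ, (1 / (k.factorial * (n + k).factorial) : ℝ) * (r / 2) ^ (n + 2 * k) := by
  unfold besselI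
  congr 1; funext k
  have : ((n : ℝ) + k + 1) = ((n + k : ℕ) : ℝ) + 1 := by push_cast; ring
  rw [this, Real.Gamma_nat_eq_factorial]

lemma summable_of_expBound (g : ℕ → ℝ) (C y : ℝ)
    (h : ∀ k, |g k| ≤ C * (y ^ k / k.factorial)) : Summable g := by
  apply summable_abs_iff.mp
  exact Summable.of_nonneg_of_le (fun k => abs_nonneg _) h
    ((Real.summable_pow_div_factorial y).mul_left C)

lemma term_bound (n : ℕ) (M x : ℝ) (hx : |x| ≤ M) (e : ℕ) (a : ℝ) (k : ℕ)
    (he : e ≤ n + 2 * k) (ha : |a| ≤ (n : ℝ) + 2 * k + 1) :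
    |a * (1 / (k.factorial * (n + k).factorial) : ℝ) * (x / 2) ^ e|
      ≤ ((n : ℝ) + 2) * (M / 2 + 1) ^ n * ((2 * (M / 2 + 1) ^ 2) ^ k / k.factorial) := by
  have hM0 : 0 ≤ M := le_trans (abs_nonneg x) hx
  have hM : (1 : ℝ) ≤ M / 2 + 1 := by linarith
  have h1 : |(x / 2) ^ e| ≤ (M / 2 + 1) ^ (n + 2 * k) := by
    rw [abs_pow]
    calc |x / 2| ^ e ≤ (M / 2 + 1) ^ e := by
          apply pow_le_pow_left₀ (abs_nonneg _) _
          rw [abs_div]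
          simp only [Nat.abs_ofNat]
          linarith
      _ ≤ (M / 2 + 1) ^ (n + 2 * k) := pow_le_pow_right₀ hM he
  have h2 : ((n : ℝ) + 2 * k + 1) ≤ ((n : ℝ) + 2) * 2 ^ k := by
    have h2k : (k : ℝ) + 1 ≤ 2 ^ k := by exact_mod_cast Nat.lt_two_pow_self (n := k)
    have hn : (0:ℝ) ≤ n := Nat.cast_nonneg n
    nlinarith
  have h3 : (1 / ((k.factorial : ℝ) * (n + k).factorial)) ≤ 1 / k.factorial := by
    apply div_le_div_of_nonneg_left (by norm_num) (by positivity)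
    have : (1 : ℝ) ≤ (n + k).factorial := by
      exact_mod_cast Nat.one_le_iff_ne_zero.mpr (n+k).factorial_ne_zero
    nlinarith [(Nat.cast_pos (α := ℝ)).mpr k.factorial_pos]
  calc |a * (1 / (k.factorial * (n + k).factorial) : ℝ) * (x / 2) ^ e|
      = |a| * |(1 / (k.factorial * (n + k).factorial) : ℝ)| * |(x / 2) ^ e| := by
        rw [abs_mul, abs_mul]
    _ ≤ ((n : ℝ) + 2 * k + 1) * (1 / k.factorial) * ((M / 2 + 1) ^ (n + 2 * k)) := by
        apply mul_le_mul _ h1 (abs_nonneg _) (by positivity)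
        apply mul_le_mul ha _ (abs_nonneg _) (by positivity)
        rw [abs_of_nonneg (by positivity)]; exact h3
    _ ≤ (((n : ℝ) + 2) * 2 ^ k) * (1 / k.factorial) * ((M / 2 + 1) ^ (n + 2 * k)) := by
        apply mul_le_mul_of_nonneg_right (mul_le_mul_of_nonneg_right h2 (by positivity)) (by positivity)
    _ = ((n : ℝ) + 2) * (M / 2 + 1) ^ n * ((2 * (M / 2 + 1) ^ 2) ^ k / k.factorial) := by
        rw [pow_add, pow_mul, mul_pow]
        field_simp

lemma summable_besselI (n : ℕ) (x : ℝ) :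
    Summable (fun k : ℕ => (1 / (k.factorial * (n + k).factorial) : ℝ) * (x / 2) ^ (n + 2 * k)) := by
  apply summable_of_expBound _ (((n : ℝ) + 2) * (|x| / 2 + 1) ^ n) (2 * (|x| / 2 + 1) ^ 2)
  intro k
  have := term_bound n |x| x le_rfl (n + 2 * k) 1 k le_rfl
    (by rw [abs_one]; nlinarith [Nat.cast_nonneg (α := ℝ) n, Nat.cast_nonneg (α := ℝ) k])
  simpa [one_mul] using this
lemma besselI_hasDerivAt (n : ℕ) {r : ℝ} (hr : 0 < r) :
    HasDerivAt (besselI n) (besselI (n + 1) r + n * besselI n r / r) r := by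
  have hfun : besselI n = fun x : ℝ =>
      ∑' k : ℕ, (1 / (k.factorial * (n + k).factorial) : ℝ) * (x / 2) ^ (n + 2 * k) :=
    funext fun x => besselI_eq n x
  set M := |r| + 1 with hMdef
  have hrM : |r| < M := by simp [hMdef]
  have hrmem : r ∈ Ioo (-M) M := by
    rcases abs_lt.mp hrM with ⟨h1, h2⟩; exact ⟨h1, h2⟩
  have key : HasDerivAt (fun x : ℝ =>
      ∑' k : ℕ, (1 / (k.factorial * (n + k).factorial) : ℝ) * (x / 2) ^ (n + 2 * k))
      (∑' k : ℕ, (1 / (k.factorial * (n + k).factorial) : ℝ) *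
        (((n : ℝ) + 2 * k) * (r / 2) ^ (n + 2 * k - 1) * (1 / 2))) r := by
    apply hasDerivAt_tsum_of_isPreconnected
      (u := fun k : ℕ => ((n : ℝ) + 2) * (M / 2 + 1) ^ n * ((2 * (M / 2 + 1) ^ 2) ^ k / k.factorial))
      (t := Ioo (-M) M) (y₀ := r)
      (g' := fun (k : ℕ) (y : ℝ) => (1 / (k.factorial * (n + k).factorial) : ℝ) *
        (((n : ℝ) + 2 * k) * (y / 2) ^ (n + 2 * k - 1) * (1 / 2)))
    · exact (Real.summable_pow_div_factorial _).mul_left _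
    · exact isOpen_Ioo
    · exact isPreconnected_Ioo
    · intro k y _
      have h := ((((hasDerivAt_id y).div_const 2).pow (n + 2 * k)).const_mul
        ((1 : ℝ) / (k.factorial * (n + k).factorial)))
      simp only [id_eq] at h
      refine h.congr_deriv ?_
      push_cast
      ring
    · intro k y hy
      rw [Real.norm_eq_abs]
      have hsh : (1 / (k.factorial * (n + k).factorial) : ℝ) *
          (((n : ℝ) + 2 * k) * (y / 2) ^ (n + 2 * k - 1) * (1 / 2))
          = (((n : ℝ) + 2 * k) / 2) * (1 / (k.factorial * (n + k).factorial) : ℝ) *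
            (y / 2) ^ (n + 2 * k - 1) := by ring
      rw [hsh]
      apply term_bound n M y (le_of_lt (abs_lt.mpr ⟨hy.1, hy.2⟩)) _ _ _ (Nat.sub_le _ _)
      rw [abs_of_nonneg (by positivity)]
      nlinarith [Nat.cast_nonneg (α := ℝ) n, Nat.cast_nonneg (α := ℝ) k]
    · exact hrmem
    · exact summable_besselI n r
    · exact hrmem
  have hDk : ∀ k : ℕ, (1 / (k.factorial * (n + k).factorial) : ℝ) *
      (((n : ℝ) + 2 * k) * (r / 2) ^ (n + 2 * k - 1) * (1 / 2))
      = ((n : ℝ) / r) * ((1 / (k.factorial * (n + k).factorial) : ℝ) * (r / 2) ^ (n + 2 * k))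
        + (k : ℝ) * (1 / (k.factorial * (n + k).factorial) : ℝ) * (r / 2) ^ (n + 2 * k - 1) := by
    intro k
    by_cases h : n + 2 * k = 0
    · obtain ⟨hn, hk⟩ : n = 0 ∧ k = 0 := by omega
      subst hn; subst hk; simp
    · have hm : n + 2 * k = (n + 2 * k - 1) + 1 := by omega
      rw [hm, pow_succ]
      rw [show (n + 2*k-1) + 1 - 1 = n + 2*k - 1 from by omega]
      field_simp
  have hsumA : Summable (fun k : ℕ => ((n : ℝ) / r) *
      ((1 / (k.factorial * (n + k).factorial) : ℝ) * (r / 2) ^ (n + 2 * k))) :=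
    (summable_besselI n r).mul_left _
  have hsumB : Summable (fun k : ℕ => (k : ℝ) *
      (1 / (k.factorial * (n + k).factorial) : ℝ) * (r / 2) ^ (n + 2 * k - 1)) := by
    apply summable_of_expBound _ (((n : ℝ) + 2) * (|r| / 2 + 1) ^ n) (2 * (|r| / 2 + 1) ^ 2)
    intro k
    apply term_bound n |r| r le_rfl _ _ _ (Nat.sub_le _ _)
    rw [abs_of_nonneg (Nat.cast_nonneg k)]
    nlinarith [Nat.cast_nonneg (α := ℝ) n, Nat.cast_nonneg (α := ℝ) k]
  have hB : (∑' k : ℕ, (k : ℝ) * (1 / (k.factorial * (n + k).factorial) : ℝ) *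
      (r / 2) ^ (n + 2 * k - 1)) = besselI (n + 1) r := by
    rw [hsumB.tsum_eq_zero_add]
    simp only [Nat.cast_zero, zero_mul, zero_add]
    rw [besselI_eq (n + 1) r]
    congr 1; funext k
    have hfac : (((k + 1).factorial : ℕ) : ℝ) = ((k : ℝ) + 1) * k.factorial := by
      rw [Nat.factorial_succ]; push_cast; ring
    have hexp : n + 2 * (k + 1) - 1 = (n + 1) + 2 * k := by omega
    have hind : n + (k + 1) = (n + 1) + k := by omega
    rw [hexp, hind]
    push_cast [Nat.factorial_succ]
    have hk1 : ((k : ℝ) + 1) ≠ 0 := by positivity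
    have hkf : ((k.factorial : ℕ) : ℝ) ≠ 0 := by
      exact_mod_cast k.factorial_ne_zero
    have hnf : (((n + 1 + k).factorial : ℕ) : ℝ) ≠ 0 := by
      exact_mod_cast (n + 1 + k).factorial_ne_zero
    field_simp
  have hsum : (∑' k : ℕ, (1 / (k.factorial * (n + k).factorial) : ℝ) *
      (((n : ℝ) + 2 * k) * (r / 2) ^ (n + 2 * k - 1) * (1 / 2)))
      = besselI (n + 1) r + n * besselI n r / r := by
    rw [tsum_congr hDk, hsumA.tsum_add hsumB, hB, tsum_mul_left, ← besselI_eq]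
    ring
  rw [← hfun] at key
  rw [hsum] at key
  exact key
lemma besselI_two {r : ℝ} (hr : 0 < r) :
    besselI 2 r = besselI 0 r - 2 * besselI 1 r / r := by
  have hr' : r ≠ 0 := hr.ne'
  have hs0 := summable_besselI 0 r
  have hs1 := summable_besselI 1 r
  have hS : (fun k : ℕ => (2 / r) * ((1 / (k.factorial * (1 + k).factorial) : ℝ) * (r / 2) ^ (1 + 2 * k)))
      = fun k : ℕ => (1 / (k.factorial * (1 + k).factorial) : ℝ) * (r / 2) ^ (0 + 2 * k) := by
    funext k
    rw [show 1 + 2 * k = (0 + 2 * k) + 1 from by omega, pow_succ]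
    field_simp
  have h2I1 : 2 * besselI 1 r / r
      = ∑' k : ℕ, (1 / (k.factorial * (1 + k).factorial) : ℝ) * (r / 2) ^ (0 + 2 * k) := by
    rw [besselI_eq 1 r, ← hS, tsum_mul_left]
    ring
  have hsS : Summable (fun k : ℕ => (1 / (k.factorial * (1 + k).factorial) : ℝ) * (r / 2) ^ (0 + 2 * k)) := by
    rw [← hS]; exact hs1.mul_left _
  rw [h2I1, besselI_eq 0 r, ← hs0.tsum_sub hsS, besselI_eq 2 r]
  rw [(hs0.sub hsS).tsum_eq_zero_add]
  have h0 : (1 / ((0:ℕ).factorial * (0 + 0).factorial) : ℝ) * (r / 2) ^ (0 + 2 * 0)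
      - (1 / ((0:ℕ).factorial * (1 + 0).factorial) : ℝ) * (r / 2) ^ (0 + 2 * 0) = 0 := by
    norm_num [Nat.factorial]
  rw [h0, zero_add]
  symm
  congr 1; funext k
  have e1 : 0 + 2 * (k + 1) = (2 + 2 * k) := by omega
  have e2 : 0 + (k + 1) = k + 1 := by omega
  have e3 : 1 + (k + 1) = k + 2 := by omega
  have e4 : 2 + k = k + 2 := by omega
  have e5 : 2 + 2 * k = 2 + 2 * k := rfl
  rw [e1, e2, e3, e4]
  have hfk : ((k.factorial : ℕ) : ℝ) ≠ 0 := by exact_mod_cast k.factorial_ne_zero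
  have hf1 : (((k+1).factorial : ℕ) : ℝ) ≠ 0 := by exact_mod_cast (k+1).factorial_ne_zero
  have hf2 : (((k+2).factorial : ℕ) : ℝ) ≠ 0 := by exact_mod_cast (k+2).factorial_ne_zero
  have hs1' : (((k+1).factorial : ℕ) : ℝ) = ((k:ℝ) + 1) * k.factorial := by
    rw [Nat.factorial_succ]; push_cast; ring
  have hs2' : (((k+2).factorial : ℕ) : ℝ) = ((k:ℝ) + 2) * (k+1).factorial := by
    rw [show k + 2 = (k+1) + 1 from rfl, Nat.factorial_succ]; push_cast; ring
  rw [hs2', hs1']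
  field_simp
  ring

lemma besselI_zero_hasDerivAt {s : ℝ} (hs : 0 < s) :
    HasDerivAt (besselI 0) (besselI 1 s) s := by
  have h := besselI_hasDerivAt 0 hs
  simpa using h

lemma besselI_one_hasDerivAt {s : ℝ} (hs : 0 < s) :
    HasDerivAt (besselI 1) (besselI 0 s - besselI 1 s / s) s := by
  have h := besselI_hasDerivAt 1 hs
  rw [besselI_two hs] at h
  have hs' : s ≠ 0 := hs.ne'
  convert h using 1
  push_cast
  field_simp
  ring

theorem L1_apply (r : ℝ) (hr : 0 < r) :
    L1 (fun s : ℝ => s * (-(besselI 1 s) ^ 2 + besselI 0 s * besselI 2 s)) r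
      = 4 * besselI 1 r * (besselI 0 r - besselI 1 r / r) := by
  set F : ℝ → ℝ := fun s => s * (-(besselI 1 s) ^ 2 + besselI 0 s * besselI 2 s) with hF
  set Ft : ℝ → ℝ := fun s =>
    s * ((besselI 0 s) ^ 2 - (besselI 1 s) ^ 2) - 2 * (besselI 0 s * besselI 1 s) with hFt
  set G : ℝ → ℝ := fun s =>
    (-(besselI 0 s) ^ 2 - (besselI 1 s) ^ 2) + (2 * (besselI 0 s * besselI 1 s)) / s with hG
  have hmem : Ioi (0 : ℝ) ∈ 𝓝 r := Ioi_mem_nhds hr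
  have hFFt : F =ᶠ[𝓝 r] Ft := by
    filter_upwards [hmem] with s hs
    simp only [hF, hFt]
    rw [besselI_two hs]
    have hs' : s ≠ 0 := (mem_Ioi.mp hs).ne'
    field_simp
    ring
  have hFt' : ∀ s : ℝ, 0 < s → HasDerivAt Ft (G s) s := by
    intro s hs
    have h0 := besselI_zero_hasDerivAt hs
    have h1 := besselI_one_hasDerivAt hs
    have d1 := (hasDerivAt_id s).mul ((h0.pow 2).sub (h1.pow 2))
    have d2 := (h0.mul h1).const_mul (2 : ℝ)
    have d := d1.sub d2
    refine d.congr_deriv ?_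
    have hs' : s ≠ 0 := hs.ne'
    simp only [hG, Pi.sub_apply, Pi.pow_apply, id_eq]
    field_simp
    ring
  have hGd : HasDerivAt G
      (((-(2 * besselI 0 r ^ 1 * besselI 1 r)) - 2 * besselI 1 r ^ 1 * (besselI 0 r - besselI 1 r / r))
        + ((2 * (besselI 1 r * besselI 1 r + besselI 0 r * (besselI 0 r - besselI 1 r / r))) * r
          - (2 * (besselI 0 r * besselI 1 r)) * 1) / r ^ 2) r := by
    have h0 := besselI_zero_hasDerivAt hr
    have h1 := besselI_one_hasDerivAt hr
    exact (((h0.pow 2).neg.sub (h1.pow 2)).add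
      (((h0.mul h1).const_mul (2 : ℝ)).div (hasDerivAt_id r) hr.ne'))
  have hdF : deriv F =ᶠ[𝓝 r] G := by
    apply hFFt.deriv.trans
    filter_upwards [hmem] with s hs
    exact (hFt' s hs).deriv
  have hd1 : deriv F r = G r := hdF.eq_of_nhds
  have hd2 : deriv (deriv F) r = deriv G r := hdF.deriv_eq
  have hFr : F r = Ft r := hFFt.eq_of_nhds
  unfold L1
  rw [hd2, hGd.deriv, hd1, hFr]
  simp only [hFt, hG]
  have hr' : r ≠ 0 := hr.ne'
  field_simp
  ring
end

section
/- For every nonnegative integer n, P_n(r) → 0 and r·P_n(r) → 1 as r → ∞. -/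
open Real Filter Set

namespace BesselAux

noncomputable def a (x : ℝ) (j : ℕ) : ℝ := x ^ j / j.factorial

noncomputable def b (x : ℝ) (n k : ℕ) : ℝ := a x k * a x (n + k)

lemma besselI_eq (n : ℕ) (r : ℝ) : besselI n r = ∑' k, b (r/2) n k := by
  unfold besselI b a
  congr 1; funext k
  rw [show ((n:ℝ) + (k:ℝ) + 1) = ((n + k : ℕ) : ℝ) + 1 by push_cast; ring,
    Real.Gamma_nat_eq_factorial, show n + 2*k = k + (n+k) by ring, pow_add]
  have h1 : (k.factorial : ℝ) ≠ 0 := Nat.cast_ne_zero.2 k.factorial_ne_zero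
  have h2 : ((n+k).factorial : ℝ) ≠ 0 := Nat.cast_ne_zero.2 (n+k).factorial_ne_zero
  field_simp

lemma b_nonneg {x : ℝ} (hx : 0 ≤ x) (n k : ℕ) : 0 ≤ b x n k := by
  unfold b a; positivity

lemma summable_b (x : ℝ) (hx : 0 ≤ x) (n : ℕ) : Summable (fun k => b x n k) := by
  have hs : Summable (a x) := Real.summable_pow_div_factorial x
  have hnn : ∀ j, 0 ≤ a x j := fun j => by unfold a; positivity
  refine Summable.of_nonneg_of_le (fun k => mul_nonneg (hnn k) (hnn (n+k)))
    (fun k => ?_) (hs.mul_right (∑' j, a x j))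
  exact mul_le_mul_of_nonneg_left (Summable.le_tsum hs (n+k) (fun j _ => hnn j)) (hnn k)

lemma besselI_pos (n : ℕ) {r : ℝ} (hr : 0 < r) : 0 < besselI n r := by
  have hx : 0 < r/2 := by linarith
  rw [besselI_eq]
  refine Summable.tsum_pos (summable_b _ hx.le n) (b_nonneg hx.le n) 0 ?_
  unfold b a
  positivity

lemma b_shift (x : ℝ) (hx : x ≠ 0) (n k : ℕ) :
    b x n (k+1) = b x (n+2) k + ((n+1)/x) * b x (n+1) (k+1) := by
  unfold b a
  have e1 : n + (k+1) = (n+k) + 1 := by omega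
  have e2 : n + 2 + k = ((n+k) + 1) + 1 := by omega
  have e3 : n + 1 + (k + 1) = ((n+k)+1)+1 := by omega
  rw [e1, e2, e3]
  simp only [Nat.factorial_succ]
  have h1 : (k.factorial : ℝ) ≠ 0 := Nat.cast_ne_zero.2 k.factorial_ne_zero
  have h2 : ((n+k).factorial : ℝ) ≠ 0 := Nat.cast_ne_zero.2 (n+k).factorial_ne_zero
  have h3 : ((k:ℝ)+1) ≠ 0 := by positivity
  have h4 : ((n+k:ℕ):ℝ)+1 ≠ 0 := by positivity
  have h5 : ((n+k:ℕ):ℝ)+1+1 ≠ 0 := by positivity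
  push_cast
  field_simp
  ring

lemma b_zero (x : ℝ) (hx : x ≠ 0) (n : ℕ) :
    b x n 0 = ((n+1)/x) * b x (n+1) 0 := by
  unfold b a
  simp only [Nat.add_zero, Nat.factorial_succ, Nat.factorial_zero]
  have h2 : ((n).factorial : ℝ) ≠ 0 := Nat.cast_ne_zero.2 (n).factorial_ne_zero
  have h4 : ((n:ℝ))+1 ≠ 0 := by positivity
  push_cast
  field_simp
  ring

lemma recurrence (n : ℕ) {r : ℝ} (hr : 0 < r) :
    besselI n r = besselI (n+2) r + (2*(n+1)/r) * besselI (n+1) r := by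
  have hx : (0:ℝ) < r/2 := by linarith
  set x := r/2 with hxdef
  have hxne : x ≠ 0 := ne_of_gt hx
  have hsum : ∀ m, Summable (fun k => b x m k) := fun m => summable_b x hx.le m
  have hc : (2*(n+1)/r : ℝ) = (n+1)/x := by
    rw [hxdef]; field_simp
  rw [besselI_eq, besselI_eq, besselI_eq, hc]
  have hshift : ∀ m : ℕ, Summable (fun k => b x m (k+1)) :=
    fun m => (summable_nat_add_iff 1).2 (hsum m)
  rw [Summable.tsum_eq_zero_add (hsum n), Summable.tsum_eq_zero_add (hsum (n+1))]
  have : ∑' k, b x n (k+1) = ∑' k, (b x (n+2) k + ((n+1)/x) * b x (n+1) (k+1)) := by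
    congr 1; funext k; exact b_shift x hxne n k
  rw [this, Summable.tsum_add (hsum (n+2)) ((hshift (n+1)).mul_left _), tsum_mul_left,
    b_zero x hxne n]
  ring

lemma b_mul_eq (x : ℝ) (hx : 0 < x) (n k : ℕ) :
    b x n k * b x n (k+1) = (b x (n+1) k)^2 * (((n:ℝ)+k+1)/((k:ℝ)+1)) := by
  unfold b a
  have e1 : n+1+k = (n+k)+1 := by omega
  have e2 : n+(k+1) = (n+k)+1 := by omega
  rw [e1, e2]
  simp only [Nat.factorial_succ, pow_succ]
  have h1 : (k.factorial : ℝ) ≠ 0 := Nat.cast_ne_zero.2 k.factorial_ne_zero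
  have h2 : ((n+k).factorial : ℝ) ≠ 0 := Nat.cast_ne_zero.2 (n+k).factorial_ne_zero
  have h3 : ((k:ℝ)+1) ≠ 0 := by positivity
  have h4 : ((n+k:ℕ):ℝ)+1 ≠ 0 := by positivity
  have h5 : ((n:ℝ)+(k:ℝ)+1) ≠ 0 := by positivity
  push_cast
  field_simp

lemma b_amgm (x : ℝ) (hx : 0 < x) (n k : ℕ) :
    2 * b x (n+1) k ≤ b x n k + b x n (k+1) := by
  have h := b_mul_eq x hx n k
  have hc : (1:ℝ) ≤ ((n:ℝ)+k+1)/((k:ℝ)+1) := by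
    rw [le_div_iff₀ (by positivity)]
    have : (0:ℝ) ≤ (n:ℝ) := Nat.cast_nonneg n
    linarith
  have ht := b_nonneg hx.le (n+1) k
  have hp := b_nonneg hx.le n k
  have hq := b_nonneg hx.le n (k+1)
  nlinarith [sq_nonneg (b x n k - b x n (k+1)), sq_nonneg (b x n k + b x n (k+1) - 2 * b x (n+1) k)]

lemma besselI_succ_le (n : ℕ) {r : ℝ} (hr : 0 < r) :
    besselI (n+1) r ≤ besselI n r := by
  have hx : (0:ℝ) < r/2 := by linarith
  set x := r/2
  have hsum : ∀ m, Summable (fun k => b x m k) := fun m => summable_b x hx.le m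
  have hshift : Summable (fun k => b x n (k+1)) := (summable_nat_add_iff 1).2 (hsum n)
  rw [besselI_eq, besselI_eq]
  have h1 : 2 * ∑' k, b x (n+1) k ≤ ∑' k, (b x n k + b x n (k+1)) := by
    rw [← tsum_mul_left]
    exact Summable.tsum_le_tsum (fun k => b_amgm x hx n k) ((hsum (n+1)).mul_left 2)
      ((hsum n).add hshift)
  rw [Summable.tsum_add (hsum n) hshift] at h1
  have h2 : ∑' k, b x n (k+1) ≤ ∑' k, b x n k := by
    rw [Summable.tsum_eq_zero_add (hsum n)]
    have := b_nonneg hx.le n 0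
    linarith
  linarith

lemma ratio_bounds (n : ℕ) {r : ℝ} (hr : 0 < r) :
    r / (r + 2*(n+1)) ≤ besselI (n+1) r / besselI n r ∧
      besselI (n+1) r / besselI n r ≤ 1 := by
  have h0 := besselI_pos n hr
  have h1 := besselI_pos (n+1) hr
  have hmon := besselI_succ_le n hr
  have hmon2 := besselI_succ_le (n+1) hr
  have hrec := recurrence n hr
  constructor
  · rw [div_le_div_iff₀ (by linarith) h0]
    have hkey : besselI n r ≤ (1 + 2*(n+1)/r) * besselI (n+1) r := by
      rw [hrec]; have : besselI (n+1+1) r ≤ besselI (n+1) r := hmon2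
      ring_nf; ring_nf at this; nlinarith
    calc r * besselI n r ≤ r * ((1 + 2*(n+1)/r) * besselI (n+1) r) := by nlinarith
      _ = besselI (n+1) r * (r + 2*(n+1)) := by field_simp
  · rw [div_le_one h0]; exact hmon

end BesselAux

open BesselAux

theorem P_limits_at_top (n : ℕ) :
    Tendsto (P n) atTop (nhds 0) ∧ Tendsto (fun r : ℝ => r * P n r) atTop (nhds 1) := by
  set c : ℝ := 2*((n:ℝ)+1) with hc
  have hcpos : 0 < c := by positivity
  have hev : ∀ᶠ r : ℝ in atTop, 0 < r := eventually_gt_atTop 0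
  -- bounds
  have hPmul : ∀ r : ℝ, 0 < r → r * P n r = besselI (n+1) r / besselI n r := by
    intro r hr
    have h0 := (besselI_pos n hr).ne'
    unfold P
    field_simp
  constructor
  · -- P → 0
    have hlow : ∀ᶠ r : ℝ in atTop, (0:ℝ) ≤ P n r := by
      filter_upwards [hev] with r hr
      exact div_nonneg (besselI_pos (n+1) hr).le (mul_nonneg hr.le (besselI_pos n hr).le)
    have hup : ∀ᶠ r : ℝ in atTop, P n r ≤ 1/r := by
      filter_upwards [hev] with r hr
      have h0 := besselI_pos n hr
      have hmon := besselI_succ_le n hr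
      have h1 := besselI_pos (n+1) hr
      unfold P
      rw [div_le_div_iff₀ (by positivity) hr]
      nlinarith
    have h1r : Tendsto (fun r : ℝ => 1/r) atTop (nhds 0) := by
      simpa using tendsto_inv_atTop_zero
    exact tendsto_of_tendsto_of_tendsto_of_le_of_le' tendsto_const_nhds h1r hlow hup
  · -- r * P → 1
    have hfrac : Tendsto (fun r : ℝ => r/(r+c)) atTop (nhds 1) := by
      have h1 : Tendsto (fun r : ℝ => c/(r+c)) atTop (nhds 0) :=
        Tendsto.div_atTop tendsto_const_nhds (tendsto_atTop_add_const_right _ c tendsto_id)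
      have h2 : Tendsto (fun r : ℝ => 1 - c/(r+c)) atTop (nhds 1) := by
        simpa using tendsto_const_nhds.sub h1
      refine h2.congr' ?_
      filter_upwards [hev] with r hr
      have : r + c ≠ 0 := by positivity
      field_simp
      ring
    have hlow : ∀ᶠ r : ℝ in atTop, r/(r+c) ≤ r * P n r := by
      filter_upwards [hev] with r hr
      rw [hPmul r hr]
      exact (ratio_bounds n hr).1
    have hup : ∀ᶠ r : ℝ in atTop, r * P n r ≤ 1 := by
      filter_upwards [hev] with r hr
      rw [hPmul r hr]
      exact (ratio_bounds n hr).2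
    exact tendsto_of_tendsto_of_tendsto_of_le_of_le' hfrac tendsto_const_nhds hlow hup
end
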